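/- Assume the semigroup e^{-tL} has kernel p_t(x,y) with Gaussian upper bound |p_t(x,y)| ≤ C t^{-n/2} e^{-c|x-y|²/t}. Then for 0 < α < n, the difference operator L^{-α/2} − e^{-tL} L^{-α/2} has an associated kernel K_{α,t}(x,y) satisfying |K_{α,t}(x,y)| ≤ C' |x−y|^{α−n} · t/|x−y|² for all x ≠ y and t > 0. -/

import Mathlib

open MeasureTheory Real Set

noncomputable section

variable {n : ℕ}

/-- The closed cube with center `c` and "radius" (half side length) `r`. -/
def cube (c : Fin n → ℝ) (r : ℝ) : Set (Fin n → ℝ) := {y | ∀ i, |y i - c i| ≤ r}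

/-- Average of `f` over `Q`. -/
def mean (f : (Fin n → ℝ) → ℝ) (Q : Set (Fin n → ℝ)) : ℝ :=
  (volume Q).toReal⁻¹ * ∫ x in Q, f x

/-- Weighted measure of a set: `ω(Q) = ∫_Q ω`. -/
def wInt (ω : (Fin n → ℝ) → ℝ) (Q : Set (Fin n → ℝ)) : ℝ := ∫ x in Q, ω x

/-- Muckenhoupt `A₁`. -/
def IsA1 (ω : (Fin n → ℝ) → ℝ) : Prop :=
  ∃ C > 0, ∀ (c : Fin n → ℝ) (r : ℝ), 0 < r →
    mean ω (cube c r) ≤ C * essInf ω (volume.restrict (cube c r))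

/-- Muckenhoupt `A_p`, `1 < p < ∞`. -/
def IsAp (p : ℝ) (ω : (Fin n → ℝ) → ℝ) : Prop :=
  ∃ C > 0, ∀ (c : Fin n → ℝ) (r : ℝ), 0 < r →
    mean ω (cube c r) * (mean (fun x => ω x ^ (-(1 / (p - 1)))) (cube c r)) ^ (p - 1) ≤ C

/-- `A_∞` : `ω ∈ A_p` for some finite `p > 1`. -/
def IsAinf (ω : (Fin n → ℝ) → ℝ) : Prop := ∃ p > 1, IsAp p ω

/-- The class `A_{p,q}`. -/
def IsApq (p q : ℝ) (ω : (Fin n → ℝ) → ℝ) : Prop :=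
  ∃ C > 0, ∀ (c : Fin n → ℝ) (r : ℝ), 0 < r →
    (mean (fun x => ω x ^ q) (cube c r)) ^ (1 / q) *
      (mean (fun x => ω x ^ (-(p / (p - 1)))) (cube c r)) ^ ((p - 1) / p) ≤ C

/-- Reverse Hölder class `RH_r`. -/
def IsRH (ω : (Fin n → ℝ) → ℝ) (r : ℝ) : Prop :=
  ∃ C > 0, ∀ (c : Fin n → ℝ) (ρ : ℝ), 0 < ρ →
    (mean (fun x => ω x ^ r) (cube c ρ)) ^ (1 / r) ≤ C * mean ω (cube c ρ)

/-- Critical reverse Hölder index `r_ω`. -/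
def rwIndex (ω : (Fin n → ℝ) → ℝ) : ℝ := sSup {r : ℝ | 1 < r ∧ IsRH ω r}

/-- Membership in weighted BMO(ω). -/
def MemBMOW (ω b : (Fin n → ℝ) → ℝ) : Prop :=
  ∃ M : ℝ, ∀ (c : Fin n → ℝ) (r : ℝ), 0 < r →
    (∫ x in cube c r, |b x - mean b (cube c r)|) ≤ M * wInt ω (cube c r)

/-- Weighted BMO norm. -/
def bmoW (ω b : (Fin n → ℝ) → ℝ) : ℝ :=
  ⨆ c : Fin n → ℝ, ⨆ r : {r : ℝ // 0 < r},
    (wInt ω (cube c ↑r))⁻¹ * ∫ x in cube c ↑r, |b x - mean b (cube c ↑r)|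

/-- Membership in BMO. -/
def MemBMO (b : (Fin n → ℝ) → ℝ) : Prop :=
  ∃ M : ℝ, ∀ (c : Fin n → ℝ) (r : ℝ), 0 < r →
    mean (fun x => |b x - mean b (cube c r)|) (cube c r) ≤ M

/-- BMO norm. -/
def bmoN (b : (Fin n → ℝ) → ℝ) : ℝ :=
  ⨆ c : Fin n → ℝ, ⨆ r : {r : ℝ // 0 < r},
    mean (fun x => |b x - mean b (cube c ↑r)|) (cube c ↑r)

/-- Two-weight weighted Morrey norm `‖f‖_{L^{p,k}(μ,ν)}`. -/
def morrey (p k : ℝ) (μ ν f : (Fin n → ℝ) → ℝ) : ℝ :=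
  ⨆ c : Fin n → ℝ, ⨆ r : {r : ℝ // 0 < r},
    ((wInt ν (cube c ↑r)) ^ (-k) * ∫ x in cube c ↑r, |f x| ^ p * μ x) ^ (1 / p)

/-- Supremum over all cubes containing `x`. -/
def supCubes (x : Fin n → ℝ) (F : (Fin n → ℝ) → ℝ → ℝ) : ℝ :=
  ⨆ cr : {cr : (Fin n → ℝ) × ℝ // 0 < cr.2 ∧ x ∈ cube cr.1 cr.2}, F cr.1.1 cr.1.2

/-- Hardy–Littlewood maximal function (over cubes). -/
def maxHL (f : (Fin n → ℝ) → ℝ) (x : Fin n → ℝ) : ℝ :=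
  supCubes x (fun c r => mean (fun y => |f y|) (cube c r))

/-- `M_r f = (M(|f|^r))^{1/r}`. -/
def maxR (r : ℝ) (f : (Fin n → ℝ) → ℝ) (x : Fin n → ℝ) : ℝ :=
  (maxHL (fun y => |f y| ^ r) x) ^ (1 / r)

/-- Fractional maximal operator `M_{α,t}`. -/
def maxFr (α t : ℝ) (f : (Fin n → ℝ) → ℝ) (x : Fin n → ℝ) : ℝ :=
  supCubes x (fun c r =>
    ((volume (cube c r)).toReal ^ (-(1 - α * t / (n : ℝ))) * ∫ y in cube c r, |f y| ^ t) ^ (1 / t))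

/-- Weighted maximal operator `M_{r,ω}`. -/
def maxWr (r : ℝ) (ω f : (Fin n → ℝ) → ℝ) (x : Fin n → ℝ) : ℝ :=
  supCubes x (fun c ρ =>
    ((wInt ω (cube c ρ))⁻¹ * ∫ y in cube c ρ, |f y| ^ r * ω y) ^ (1 / r))

/-- Weighted fractional maximal operator `M_{α,r,ω}`. -/
def maxFrW (α r : ℝ) (ω f : (Fin n → ℝ) → ℝ) (x : Fin n → ℝ) : ℝ :=
  supCubes x (fun c ρ =>
    ((wInt ω (cube c ρ)) ^ (-(1 - α * r / (n : ℝ))) * ∫ y in cube c ρ, |f y| ^ r * ω y) ^ (1 / r))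

/-- Gaussian upper bound for a semigroup kernel family. -/
def GaussianBound (pk : ℝ → (Fin n → ℝ) → (Fin n → ℝ) → ℝ) : Prop :=
  ∃ C > 0, ∃ cc > 0, ∀ t : ℝ, 0 < t → ∀ x y : Fin n → ℝ,
    |pk t x y| ≤ C * t ^ (-(n : ℝ) / 2) * Real.exp (-cc * ‖x - y‖ ^ 2 / t)

/-- Semigroup operator `e^{-tL}` given by its kernel. -/
def semiOp (pk : ℝ → (Fin n → ℝ) → (Fin n → ℝ) → ℝ) (t : ℝ) (f : (Fin n → ℝ) → ℝ)
    (x : Fin n → ℝ) : ℝ := ∫ y, pk t x y * f y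

/-- Generalized fractional integral `L^{-α/2}`. -/
def fracL (pk : ℝ → (Fin n → ℝ) → (Fin n → ℝ) → ℝ) (α : ℝ) (f : (Fin n → ℝ) → ℝ)
    (x : Fin n → ℝ) : ℝ :=
  (Real.Gamma (α / 2))⁻¹ * ∫ t in Ioi (0 : ℝ), semiOp pk t f x * t ^ (α / 2 - 1)

/-- Commutator `[b, T] f = b · Tf − T(bf)`. -/
def commL (b : (Fin n → ℝ) → ℝ) (T : ((Fin n → ℝ) → ℝ) → (Fin n → ℝ) → ℝ)
    (f : (Fin n → ℝ) → ℝ) (x : Fin n → ℝ) : ℝ :=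
  b x * T f x - T (fun y => b y * f y) x

/-- Sharp maximal function `M^♯_L` associated to the semigroup, with `t_Q = r_Q²`. -/
def sharpL (pk : ℝ → (Fin n → ℝ) → (Fin n → ℝ) → ℝ) (g : (Fin n → ℝ) → ℝ)
    (x : Fin n → ℝ) : ℝ :=
  supCubes x (fun c r => mean (fun y => |g y - semiOp pk (r ^ 2) g y|) (cube c r))

/-- Riesz potential `I_α`. -/
def riesz (α : ℝ) (f : (Fin n → ℝ) → ℝ) (x : Fin n → ℝ) : ℝ :=
  ∫ y, f y * ‖x - y‖ ^ (α - (n : ℝ))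

set_option maxHeartbeats 2000000

lemma my_exp_neg_le (m : ℕ) {x : ℝ} (hx : 0 < x) : Real.exp (-x) ≤ ((Nat.factorial m : ℕ) : ℝ) / x ^ m := by
  have h := Real.pow_div_factorial_le_exp (x := x) hx.le m
  have hpos : (0:ℝ) < x ^ m / (Nat.factorial m : ℝ) := by positivity
  rw [Real.exp_neg]
  calc (Real.exp x)⁻¹ ≤ (x ^ m / (Nat.factorial m : ℝ))⁻¹ := inv_anti₀ hpos h
    _ = ((Nat.factorial m : ℕ) : ℝ) / x ^ m := by rw [inv_div]

lemma my_ind_key (h : ℝ → ℝ) (a t : ℝ) (s : ℝ) : (Ioi (a + t)).indicator h (s + t)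
      = (Ioi a).indicator (fun u => h (u + t)) s := by
  by_cases hs : a < s
  · rw [Set.indicator_of_mem (by simpa using hs), Set.indicator_of_mem (by simpa using hs)]
  · rw [Set.indicator_of_notMem (by simpa using hs),
      Set.indicator_of_notMem (by simpa using hs)]

lemma my_shift_eq (h : ℝ → ℝ) (a t : ℝ) :
    ∫ s in Ioi a, h (s + t) = ∫ s in Ioi (a + t), h s := by
  rw [← integral_indicator measurableSet_Ioi, ← integral_indicator measurableSet_Ioi]
  rw [← MeasureTheory.integral_add_right_eq_self ((Ioi (a + t)).indicator h) t]
  exact integral_congr_ae (Filter.Eventually.of_forall fun s => (my_ind_key h a t s).symm)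

lemma my_shift_int (h : ℝ → ℝ) (a t : ℝ) :
    IntegrableOn (fun s => h (s + t)) (Ioi a) ↔ IntegrableOn h (Ioi (a + t)) := by
  constructor
  · intro hI
    have hind := (integrable_indicator_iff measurableSet_Ioi).2 hI
    have h2 := hind.comp_add_right (-t)
    have h3 : Integrable ((Ioi (a + t)).indicator h) volume := by
      apply h2.congr
      refine Filter.Eventually.of_forall fun s => ?_
      have := my_ind_key h a t (s + -t)
      simpa using this.symm
    exact (integrable_indicator_iff measurableSet_Ioi).1 h3
  · intro hI
    have hind := (integrable_indicator_iff measurableSet_Ioi).2 hI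
    have h2 := hind.comp_add_right t
    have h3 : Integrable ((Ioi a).indicator (fun u => h (u + t))) volume := by
      apply h2.congr
      exact Filter.Eventually.of_forall fun s => my_ind_key h a t s
    exact (integrable_indicator_iff measurableSet_Ioi).1 h3

lemma my_J_cont {β A : ℝ} (hA : 0 < A) :
    ContinuousOn (fun s : ℝ => s ^ (β - 1) * Real.exp (-(A / s))) (Ioi 0) := by
  apply ContinuousOn.mul
  · exact fun s hs => (Real.continuousAt_rpow_const s (β-1) (Or.inl (ne_of_gt hs))).continuousWithinAt
  · apply Continuous.comp_continuousOn Real.continuous_exp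
    apply ContinuousOn.neg
    exact continuousOn_const.div continuousOn_id (fun s hs => ne_of_gt hs)

lemma my_J_est {β A : ℝ} (m : ℕ) (hβ : β < 0) (hm : 0 < β + m) (hA : 0 < A) :
    IntegrableOn (fun s : ℝ => s ^ (β - 1) * Real.exp (-(A / s))) (Ioi 0) ∧
    ∫ s in Ioi (0:ℝ), s ^ (β - 1) * Real.exp (-(A / s))
      ≤ ((Nat.factorial m : ℝ) / (β + m) + 1 / (-β)) * A ^ β := by
  set F := fun s : ℝ => s ^ (β - 1) * Real.exp (-(A / s)) with hF
  have hFnn : ∀ s ∈ Ioi (0:ℝ), 0 ≤ F s := by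
    intro s hs
    have : (0:ℝ) < s := hs
    positivity
  -- bound on (0, A]
  have hbd1 : ∀ s ∈ Ioc (0:ℝ) A, F s ≤ ((Nat.factorial m : ℝ) / A ^ m) * s ^ (β + m - 1) := by
    intro s hs
    have hs0 : (0:ℝ) < s := hs.1
    have hexp : Real.exp (-(A / s)) ≤ (Nat.factorial m : ℝ) / (A / s) ^ m := by
      have := my_exp_neg_le m (x := A / s) (by positivity)
      exact this
    have h1 : F s ≤ s ^ (β - 1) * ((Nat.factorial m : ℝ) / (A / s) ^ m) := by
      apply mul_le_mul_of_nonneg_left hexp (by positivity)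
    refine h1.trans (le_of_eq ?_)
    rw [div_pow, div_div_eq_mul_div]
    rw [show (β + (m:ℝ) - 1) = (β - 1) + (m:ℝ) by ring, Real.rpow_add hs0, Real.rpow_natCast]
    field_simp
  -- bound on (A, ∞)
  have hbd2 : ∀ s ∈ Ioi A, F s ≤ s ^ (β - 1) := by
    intro s hs
    have hs0 : (0:ℝ) < s := hA.trans hs
    have hexp : Real.exp (-(A / s)) ≤ 1 := Real.exp_le_one_iff.2 (neg_nonpos.2 (by positivity))
    calc F s ≤ s ^ (β - 1) * 1 := mul_le_mul_of_nonneg_left hexp (by positivity)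
      _ = s ^ (β - 1) := mul_one _
  -- integrability pieces
  have hmeas : AEStronglyMeasurable F (volume.restrict (Ioi 0)) :=
    (my_J_cont hA).aestronglyMeasurable measurableSet_Ioi
  have hmeas1 : AEStronglyMeasurable F (volume.restrict (Ioc 0 A)) :=
    hmeas.mono_measure (Measure.restrict_mono Ioc_subset_Ioi_self le_rfl)
  have hdom1 : IntegrableOn (fun s : ℝ => ((Nat.factorial m : ℝ) / A ^ m) * s ^ (β + m - 1)) (Ioc 0 A) := by
    apply Integrable.const_mul
    have := (intervalIntegral.intervalIntegrable_rpow' (a := 0) (b := A) (r := β + m - 1) (by linarith)).1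
    exact this
  have hint1 : IntegrableOn F (Ioc 0 A) := by
    apply Integrable.mono' hdom1 hmeas1
    refine (ae_restrict_mem measurableSet_Ioc).mono fun s hs => ?_
    rw [Real.norm_eq_abs, abs_of_nonneg (hFnn s (Ioc_subset_Ioi_self hs))]
    exact hbd1 s hs
  have hdom2 : IntegrableOn (fun s : ℝ => s ^ (β - 1)) (Ioi A) :=
    integrableOn_Ioi_rpow_of_lt (by linarith) hA
  have hmeas2 : AEStronglyMeasurable F (volume.restrict (Ioi A)) :=
    hmeas.mono_measure (Measure.restrict_mono (Ioi_subset_Ioi hA.le) le_rfl)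
  have hint2 : IntegrableOn F (Ioi A) := by
    apply Integrable.mono' hdom2 hmeas2
    refine (ae_restrict_mem measurableSet_Ioi).mono fun s hs => ?_
    rw [Real.norm_eq_abs, abs_of_nonneg (hFnn s (hA.trans hs))]
    exact hbd2 s hs
  have hunion : Ioc (0:ℝ) A ∪ Ioi A = Ioi 0 := Ioc_union_Ioi_eq_Ioi hA.le
  have hint : IntegrableOn F (Ioi 0) := by
    rw [← hunion]; exact hint1.union hint2
  refine ⟨hint, ?_⟩
  have hsplit : ∫ s in Ioi (0:ℝ), F s = (∫ s in Ioc (0:ℝ) A, F s) + ∫ s in Ioi A, F s := by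
    rw [← hunion]
    exact setIntegral_union (Ioc_disjoint_Ioi le_rfl) measurableSet_Ioi hint1 hint2
  have hval1 : ∫ s in Ioc (0:ℝ) A, s ^ (β + m - 1) = A ^ (β + m) / (β + m) := by
    rw [← intervalIntegral.integral_of_le hA.le]
    rw [integral_rpow (Or.inl (by linarith))]
    rw [Real.zero_rpow (by linarith : (0:ℝ) < β + ↑m - 1 + 1).ne']
    ring_nf
  have hval2 : ∫ s in Ioi A, s ^ (β - 1) = -A ^ β / β := by
    rw [integral_Ioi_rpow_of_lt (by linarith) hA]
    ring_nf
  have hest1 : ∫ s in Ioc (0:ℝ) A, F s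
      ≤ ((Nat.factorial m : ℝ) / A ^ m) * (A ^ (β + m) / (β + m)) := by
    calc ∫ s in Ioc (0:ℝ) A, F s
        ≤ ∫ s in Ioc (0:ℝ) A, ((Nat.factorial m : ℝ) / A ^ m) * s ^ (β + m - 1) :=
          setIntegral_mono_on hint1 hdom1 measurableSet_Ioc hbd1
      _ = ((Nat.factorial m : ℝ) / A ^ m) * (A ^ (β + m) / (β + m)) := by
          rw [integral_const_mul, hval1]
  have hest2 : ∫ s in Ioi A, F s ≤ -A ^ β / β := by
    calc ∫ s in Ioi A, F s ≤ ∫ s in Ioi A, s ^ (β - 1) :=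
          setIntegral_mono_on hint2 hdom2 measurableSet_Ioi hbd2
      _ = -A ^ β / β := hval2
  rw [hsplit]
  have hAm : ((Nat.factorial m : ℝ) / A ^ m) * (A ^ (β + m) / (β + m))
      = ((Nat.factorial m : ℝ) / (β + m)) * A ^ β := by
    rw [Real.rpow_add hA, Real.rpow_natCast]
    have : (0:ℝ) < A ^ m := by positivity
    field_simp
  have h2 : -A ^ β / β = (1 / (-β)) * A ^ β := by
    rw [one_div, div_eq_mul_inv, neg_mul_comm, mul_comm]
    congr 1
    rw [← neg_inv]
  calc (∫ s in Ioc (0:ℝ) A, F s) + ∫ s in Ioi A, F s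
      ≤ ((Nat.factorial m : ℝ) / A ^ m) * (A ^ (β + m) / (β + m)) + -A ^ β / β :=
        add_le_add hest1 hest2
    _ = ((Nat.factorial m : ℝ) / (β + m) + 1 / (-β)) * A ^ β := by rw [hAm, h2]; ring

lemma my_rpow_diff {δ t s : ℝ} (ht : 0 < t) (hs : 2 * t ≤ s) :
    |s ^ δ - (s - t) ^ δ| ≤ (|δ| * max 1 (2 ^ (1 - δ))) * t * s ^ (δ - 1) := by
  have hst : 0 < s - t := by linarith
  have hs0 : 0 < s := by linarith
  have hlt : s - t < s := by linarith
  obtain ⟨ξ, hξ, hslope⟩ := exists_hasDerivAt_eq_slope (fun u => u ^ δ)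
    (fun u => δ * u ^ (δ - 1)) hlt
    (by
      apply ContinuousOn.rpow_const continuousOn_id
      intro u hu
      refine Or.inl ?_
      simp only [id_eq]
      rcases hu with ⟨h1, _⟩
      exact (by nlinarith : (0:ℝ) < u).ne'
    )
    (fun u hu => Real.hasDerivAt_rpow_const
      (Or.inl (by rcases hu with ⟨h1, _⟩; exact (by nlinarith : (0:ℝ) < u).ne')))
  have hξ0 : 0 < ξ := hst.trans hξ.1
  have hξs : ξ ≤ s := hξ.2.le
  have hsb : s - (s - t) = t := by ring
  rw [hsb] at hslope
  have hdiff : s ^ δ - (s - t) ^ δ = δ * ξ ^ (δ - 1) * t := by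
    field_simp at hslope
    linarith [hslope]
  rw [hdiff, abs_mul, abs_mul, abs_of_pos ht]
  have hξb : ξ ^ (δ - 1) ≤ max 1 (2 ^ (1 - δ)) * s ^ (δ - 1) := by
    rcases le_total δ 1 with hδ | hδ
    · have h2ξ : s / 2 ≤ ξ := by
        have : t ≤ s / 2 := by linarith
        linarith [hξ.1, this]
      calc ξ ^ (δ - 1) ≤ (s / 2) ^ (δ - 1) :=
            Real.rpow_le_rpow_of_nonpos (by linarith) h2ξ (by linarith)
        _ = 2 ^ (1 - δ) * s ^ (δ - 1) := by
            rw [Real.div_rpow hs0.le (by norm_num : (0:ℝ) ≤ 2), div_eq_mul_inv,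
              ← Real.rpow_neg (by norm_num : (0:ℝ) ≤ 2),
              show -(δ - 1) = 1 - δ by ring, mul_comm]
        _ ≤ max 1 (2 ^ (1 - δ)) * s ^ (δ - 1) := by
            apply mul_le_mul_of_nonneg_right (le_max_right _ _) (by positivity)
    · calc ξ ^ (δ - 1) ≤ s ^ (δ - 1) :=
            Real.rpow_le_rpow hξ0.le hξs (by linarith)
        _ ≤ max 1 (2 ^ (1 - δ)) * s ^ (δ - 1) := by
            nth_rewrite 1 [← one_mul (s ^ (δ - 1))]
            apply mul_le_mul_of_nonneg_right (le_max_left _ _) (by positivity)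
  have habs : |ξ ^ (δ - 1)| = ξ ^ (δ - 1) := abs_of_pos (Real.rpow_pos_of_pos hξ0 _)
  rw [habs]
  calc |δ| * ξ ^ (δ - 1) * t ≤ |δ| * (max 1 (2 ^ (1 - δ)) * s ^ (δ - 1)) * t := by
        apply mul_le_mul_of_nonneg_right _ ht.le
        exact mul_le_mul_of_nonneg_left hξb (abs_nonneg _)
    _ = |δ| * max 1 (2 ^ (1 - δ)) * t * s ^ (δ - 1) := by ring

lemma my_aesm_P {P : ℝ → ℝ} {t : ℝ} (ht : 0 < t)
    (hq : AEStronglyMeasurable (fun s => P s - P (s + t)) (volume.restrict (Ioi (0:ℝ))))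
    (hdecay : ∀ s : ℝ, 0 < s → Filter.Tendsto (fun k : ℕ => P (s + k * t)) Filter.atTop (nhds 0)) :
    AEStronglyMeasurable P (volume.restrict (Ioi (0:ℝ))) := by
  set q : ℝ → ℝ := fun s => P s - P (s + t) with hqdef
  obtain ⟨q', hq'sm, hq'ae⟩ := hq
  -- null set where q ≠ q'
  have hN : volume ({s : ℝ | q s ≠ q' s} ∩ Ioi 0) = 0 := by
    have := hq'ae
    rw [Filter.EventuallyEq, ae_iff, Measure.restrict_apply' measurableSet_Ioi] at this
    exact this
  have hshift : ∀ j : ℕ, AEStronglyMeasurable (fun s => q (s + j * t))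
      (volume.restrict (Ioi (0:ℝ))) := by
    intro j
    refine ⟨fun s => q' (s + j * t), hq'sm.comp_measurable (measurable_add_const _), ?_⟩
    rw [Filter.EventuallyEq, ae_iff, Measure.restrict_apply' measurableSet_Ioi]
    refine measure_mono_null (fun s hs => ?_)
      (?_ : volume ((fun s : ℝ => s + j * t) ⁻¹' ({s : ℝ | q s ≠ q' s} ∩ Ioi 0)) = 0)
    · rcases hs with ⟨hs1, hs2⟩
      refine ⟨hs1, ?_⟩
      have : (0:ℝ) ≤ j * t := by positivity
      simp only [mem_Ioi] at hs2 ⊢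
      linarith
    · rw [show (fun s : ℝ => s + ↑j * t) ⁻¹' ({s : ℝ | q s ≠ q' s} ∩ Ioi 0)
          = (fun s : ℝ => ↑j * t + s) ⁻¹' ({s : ℝ | q s ≠ q' s} ∩ Ioi 0) by
          ext u; simp [add_comm]]
      rw [measure_preimage_add]
      exact hN
  have hpartial : ∀ k : ℕ, ∀ s : ℝ, ∑ j ∈ Finset.range k, q (s + j * t) = P s - P (s + k * t) := by
    intro k
    induction k with
    | zero => intro s; simp
    | succ k ih =>
      intro s
      rw [Finset.sum_range_succ, ih s]
      have : s + ↑k * t + t = s + (↑(k+1)) * t := by push_cast; ring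
      simp only [hqdef]
      rw [this]
      push_cast
      ring
  have hmeasSum : ∀ k : ℕ, AEStronglyMeasurable (fun s => ∑ j ∈ Finset.range k, q (s + j * t))
      (volume.restrict (Ioi (0:ℝ))) := by
    intro k
    apply Finset.aestronglyMeasurable_fun_sum
    intro j _
    exact hshift j
  apply aestronglyMeasurable_of_tendsto_ae Filter.atTop hmeasSum
  refine (ae_restrict_mem measurableSet_Ioi).mono fun s hs => ?_
  have hs0 : (0:ℝ) < s := hs
  have h1 : Filter.Tendsto (fun k : ℕ => P s - P (s + k * t)) Filter.atTop (nhds (P s - 0)) :=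
    (tendsto_const_nhds).sub (hdecay s hs0)
  rw [sub_zero] at h1
  simp only [hpartial]
  exact h1

/-- The kernel of `L^{-α/2} - e^{-tL}L^{-α/2}` satisfies
`|K_{α,t}(x,y)| ≤ C' |x-y|^{α-n} · t/|x-y|²`. -/
theorem diff_kernel_bound {n : ℕ} (hn : 0 < n)
    (pk : ℝ → (Fin n → ℝ) → (Fin n → ℝ) → ℝ) (hpk : GaussianBound pk)
    (α : ℝ) (hα : 0 < α) (hαn : α < n) :
    ∃ C' > 0, ∀ t : ℝ, 0 < t → ∀ x y : Fin n → ℝ, x ≠ y →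
      |(Real.Gamma (α / 2))⁻¹ *
          ∫ s in Ioi (0 : ℝ), s ^ (α / 2 - 1) * (pk s x y - pk (s + t) x y)|
        ≤ C' * ‖x - y‖ ^ (α - (n : ℝ)) * (t / ‖x - y‖ ^ 2) := by
    classical
  obtain ⟨C, hC, c, hc, hG⟩ := hpk
  have hnR : (0:ℝ) < n := by exact_mod_cast hn
  have hαn2 : α / 2 < n / 2 := by linarith
  set m : ℕ := n + 1 with hmdef
  have hmR : (m:ℝ) = (n:ℝ) + 1 := by rw [hmdef]; push_cast; ring
  set β₀ : ℝ := (α - n) / 2 with hβ₀def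
  set β₁ : ℝ := (α - n) / 2 - 1 with hβ₁def
  set γ : ℝ := (α - n) / 2 + (m:ℝ) with hγdef
  have hβ₀ : β₀ < 0 := by rw [hβ₀def]; linarith
  have hβ₁ : β₁ < 0 := by rw [hβ₁def]; linarith
  have hβ₀m : 0 < β₀ + (m:ℝ) := by rw [hβ₀def, hmR]; linarith
  have hβ₁m : 0 < β₁ + (m:ℝ) := by rw [hβ₁def, hmR]; linarith
  have hγ1 : 1 < γ := by rw [hγdef, hmR]; linarith
  have hγ0 : 0 < γ := by linarith
  have hΓ : 0 < Real.Gamma (α / 2) := Real.Gamma_pos_of_pos (by linarith)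
  have hΓipos : 0 < (Real.Gamma (α / 2))⁻¹ := inv_pos.2 hΓ
  set Mf : ℝ := (Nat.factorial m : ℝ) with hMfdef
  have hMf : 0 < Mf := by rw [hMfdef]; exact_mod_cast Nat.factorial_pos m
  set K₁ : ℝ := Mf / (β₀ + m) + 1 / (-β₀) with hK₁def
  set K₂ : ℝ := Mf / (β₁ + m) + 1 / (-β₁) with hK₂def
  have hK₁ : 0 < K₁ := by
    rw [hK₁def]
    have h1 : 0 ≤ Mf / (β₀ + m) := div_nonneg hMf.le hβ₀m.le
    have h2 : 0 < 1 / (-β₀) := by rw [one_div]; exact inv_pos.2 (by linarith)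
    linarith
  have hK₂ : 0 < K₂ := by
    rw [hK₂def]
    have h1 : 0 ≤ Mf / (β₁ + m) := div_nonneg hMf.le hβ₁m.le
    have h2 : 0 < 1 / (-β₁) := by rw [one_div]; exact inv_pos.2 (by linarith)
    linarith
  set Kδ : ℝ := |α / 2 - 1| * max 1 (2 ^ (1 - (α / 2 - 1))) with hKδdef
  have hKδ : 0 ≤ Kδ := by
    rw [hKδdef]
    exact mul_nonneg (abs_nonneg _) (le_trans zero_le_one (le_max_left _ _))
  set D1 : ℝ := C * Mf * 2 ^ γ / γ * (c ^ m)⁻¹ + C * K₁ * c ^ β₀ with hD1def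
  set D2 : ℝ := C * Mf * 2 ^ ((m:ℝ) - (n:ℝ) / 2) * (2 / α) * (c ^ m)⁻¹ + C * (2 / α) with hD2def
  set D3 : ℝ := Kδ * C * K₂ * c ^ β₁ with hD3def
  have hD1 : 0 ≤ D1 := by rw [hD1def]; positivity
  have hD2 : 0 ≤ D2 := by rw [hD2def]; positivity
  have hD3 : 0 ≤ D3 := by rw [hD3def]; positivity
  set C' : ℝ := (Real.Gamma (α / 2))⁻¹ * (D1 + D2 + D3) + 1 with hC'def
  have hC' : 0 < C' := by
    rw [hC'def]
    have : 0 ≤ (Real.Gamma (α / 2))⁻¹ * (D1 + D2 + D3) := by positivity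
    linarith
  refine ⟨C', hC', ?_⟩
  intro t ht x y hxy
  set r : ℝ := ‖x - y‖ with hrdef
  have hr : 0 < r := by
    rw [hrdef]
    exact norm_pos_iff.2 (sub_ne_zero.2 hxy)
  set A : ℝ := c * r ^ 2 with hAdef
  have hA : 0 < A := by rw [hAdef]; positivity
  set e : ℝ := α - (n:ℝ) - 2 with hedef
  have htr : 0 < t * r ^ e := by positivity
  -- rewrite RHS
  have hRHS : C' * r ^ (α - (n:ℝ)) * (t / r ^ 2) = C' * (t * r ^ e) := by
    have e2 : r ^ (α - (n:ℝ)) * (r ^ (((2:ℕ)):ℝ))⁻¹ = r ^ e := by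
      rw [← Real.rpow_neg hr.le, ← Real.rpow_add hr]
      congr 1
    rw [← e2, Real.rpow_natCast]
    field_simp
  rw [hRHS]
  set P : ℝ → ℝ := fun s => pk s x y with hPdef
  have hP : ∀ s : ℝ, 0 < s → |P s| ≤ C * s ^ (-(n:ℝ) / 2) * Real.exp (-(A / s)) := by
    intro s hs
    have h1 := hG s hs x y
    have h2 : -c * ‖x - y‖ ^ 2 / s = -(A / s) := by rw [hAdef, hrdef]; ring
    rw [h2] at h1
    exact h1
  by_cases hf : IntegrableOn (fun s => s ^ (α / 2 - 1) * (P s - P (s + t))) (Ioi 0)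
  swap
  · rw [integral_undef hf, mul_zero, abs_zero]
    positivity
  -- measurability of P
  have hrpowm : ∀ q : ℝ, AEStronglyMeasurable (fun s : ℝ => s ^ q) (volume.restrict (Ioi 0)) := by
    intro q
    apply ContinuousOn.aestronglyMeasurable _ measurableSet_Ioi
    exact ContinuousOn.rpow_const continuousOn_id (fun s hs => Or.inl (ne_of_gt hs))
  have hq : AEStronglyMeasurable (fun s => P s - P (s + t)) (volume.restrict (Ioi 0)) := by
    have h1 : AEStronglyMeasurable
        (fun s : ℝ => s ^ (-(α / 2 - 1)) * (s ^ (α / 2 - 1) * (P s - P (s + t))))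
        (volume.restrict (Ioi 0)) := (hrpowm _).mul hf.aestronglyMeasurable
    apply h1.congr
    refine (ae_restrict_mem measurableSet_Ioi).mono fun s hs => ?_
    have hs0 : (0:ℝ) < s := hs
    show s ^ (-(α / 2 - 1)) * (s ^ (α / 2 - 1) * (P s - P (s + t))) = P s - P (s + t)
    rw [← mul_assoc, ← Real.rpow_add hs0, neg_add_cancel, Real.rpow_zero, one_mul]
  have hdecay : ∀ s : ℝ, 0 < s →
      Filter.Tendsto (fun k : ℕ => P (s + k * t)) Filter.atTop (nhds 0) := by
    intro s hs
    have h1 : Filter.Tendsto (fun k : ℕ => s + k * t) Filter.atTop Filter.atTop :=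
      Filter.tendsto_atTop_add_const_left _ s (Filter.Tendsto.atTop_mul_const ht
        tendsto_natCast_atTop_atTop)
    have h2 := (tendsto_rpow_neg_atTop (by positivity : (0:ℝ) < (n:ℝ) / 2)).comp h1
    have h3 := h2.const_mul C
    rw [mul_zero] at h3
    apply squeeze_zero_norm _ h3
    intro k
    show ‖P (s + ↑k * t)‖ ≤ C * (s + ↑k * t) ^ (-((n:ℝ) / 2))
    have hsk : (0:ℝ) < s + k * t := by positivity
    have h1' := hP _ hsk
    rw [neg_div] at h1'
    have h2' : Real.exp (-(A / (s + k * t))) ≤ 1 :=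
      Real.exp_le_one_iff.2 (neg_nonpos.2 (by positivity))
    calc ‖P (s + ↑k * t)‖
        ≤ C * (s + ↑k * t) ^ (-((n:ℝ) / 2)) * Real.exp (-(A / (s + ↑k * t))) := h1'
      _ ≤ C * (s + ↑k * t) ^ (-((n:ℝ) / 2)) * 1 :=
          mul_le_mul_of_nonneg_left h2' (by positivity)
      _ = C * (s + ↑k * t) ^ (-((n:ℝ) / 2)) := mul_one _
  have hPm : AEStronglyMeasurable P (volume.restrict (Ioi 0)) := my_aesm_P ht hq hdecay
  -- pointwise bounds
  have hP1 : ∀ s ∈ Ioi (0:ℝ), |s ^ (α / 2 - 1) * P s|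
      ≤ C * (s ^ (β₀ - 1) * Real.exp (-(A / s))) := by
    intro s hs
    have hs0 : (0:ℝ) < s := hs
    rw [abs_mul, abs_of_nonneg (Real.rpow_nonneg hs0.le _)]
    calc s ^ (α / 2 - 1) * |P s| ≤ s ^ (α / 2 - 1) * (C * s ^ (-(n:ℝ) / 2) * Real.exp (-(A / s))) :=
          mul_le_mul_of_nonneg_left (hP s hs0) (Real.rpow_nonneg hs0.le _)
      _ = C * (s ^ (β₀ - 1) * Real.exp (-(A / s))) := by
          rw [hβ₀def, show (α - ↑n) / 2 - 1 = (α / 2 - 1) + (-(n:ℝ) / 2) by ring,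
            Real.rpow_add hs0]
          ring

  have hP2 : ∀ s ∈ Ioi (0:ℝ), |s ^ (α / 2 - 1) * P s|
      ≤ (C * Mf * (A ^ m)⁻¹) * s ^ (γ - 1) := by
    intro s hs
    have hs0 : (0:ℝ) < s := hs
    refine (hP1 s hs).trans ?_
    have hexp : Real.exp (-(A / s)) ≤ Mf / (A / s) ^ m := my_exp_neg_le m (by positivity)
    calc C * (s ^ (β₀ - 1) * Real.exp (-(A / s)))
        ≤ C * (s ^ (β₀ - 1) * (Mf / (A / s) ^ m)) := by
          apply mul_le_mul_of_nonneg_left _ hC.le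
          exact mul_le_mul_of_nonneg_left hexp (Real.rpow_nonneg hs0.le _)
      _ = (C * Mf * (A ^ m)⁻¹) * s ^ (γ - 1) := by
          rw [div_pow, div_div_eq_mul_div,
            show γ - 1 = (β₀ - 1) + (m:ℝ) from by rw [hγdef, hβ₀def]; ring,
            Real.rpow_add hs0, Real.rpow_natCast]
          field_simp
  -- key arithmetic facts
  have hAm : (A:ℝ) ^ m = c ^ m * r ^ (2 * m : ℕ) := by rw [hAdef, mul_pow, pow_mul]
  have keyT : t ≤ r ^ 2 → (A ^ m)⁻¹ * t ^ γ ≤ (c ^ m)⁻¹ * (t * r ^ e) := by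
    intro hcase
    have h1 : t ^ γ = t * t ^ (γ - 1) := by
      nth_rewrite 1 [show γ = 1 + (γ - 1) by ring]
      rw [Real.rpow_add ht, Real.rpow_one]
    have h2 : t ^ (γ - 1) ≤ (r ^ 2) ^ (γ - 1) :=
      Real.rpow_le_rpow ht.le hcase (by linarith)
    have h3 : ((r:ℝ) ^ (2:ℕ)) ^ (γ - 1) * (r ^ (2 * m : ℕ))⁻¹ = r ^ e := by
      rw [← Real.rpow_natCast r 2, ← Real.rpow_mul hr.le,
        ← Real.rpow_natCast r (2 * m), ← Real.rpow_neg hr.le, ← Real.rpow_add hr]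
      congr 1
      rw [hedef, hγdef]
      push_cast
      ring
    rw [hAm, h1, mul_inv]
    calc (c ^ m)⁻¹ * (r ^ (2*m : ℕ))⁻¹ * (t * t ^ (γ - 1))
        ≤ (c ^ m)⁻¹ * (r ^ (2*m : ℕ))⁻¹ * (t * ((r ^ 2) ^ (γ - 1))) := by
          apply mul_le_mul_of_nonneg_left _ (by positivity)
          exact mul_le_mul_of_nonneg_left h2 ht.le
      _ = (c ^ m)⁻¹ * (t * (((r:ℝ) ^ (2:ℕ)) ^ (γ - 1) * (r ^ (2*m : ℕ))⁻¹)) := by ring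
      _ = (c ^ m)⁻¹ * (t * r ^ e) := by rw [h3]
  have keyB : A ^ β₀ = c ^ β₀ * r ^ (α - (n:ℝ)) := by
    rw [hAdef, Real.mul_rpow hc.le (by positivity)]
    congr 1
    rw [← Real.rpow_natCast r 2, ← Real.rpow_mul hr.le]
    congr 1
    rw [hβ₀def]
    push_cast
    ring
  have keyC : A ^ β₁ = c ^ β₁ * r ^ e := by
    rw [hAdef, Real.mul_rpow hc.le (by positivity)]
    congr 1
    rw [← Real.rpow_natCast r 2, ← Real.rpow_mul hr.le]
    congr 1
    rw [hβ₁def, hedef]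
    push_cast
    ring
  have hr2e : ((r:ℝ) ^ (2:ℕ)) ^ β₁ = r ^ e := by
    rw [← Real.rpow_natCast r 2, ← Real.rpow_mul hr.le]
    congr 1
    rw [hβ₁def, hedef]
    push_cast
    ring
  have hsplitpow : r ^ (α - (n:ℝ)) = r ^ e * r ^ (2:ℕ) := by
    rw [← Real.rpow_natCast r 2, ← Real.rpow_add hr]
    congr 1
    rw [hedef]
    push_cast
    ring
  have hrle : r ^ 2 ≤ t → r ^ (α - (n:ℝ)) ≤ t * r ^ e := by
    intro hcase
    rw [hsplitpow]
    calc r ^ e * r ^ (2:ℕ) ≤ r ^ e * t :=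
          mul_le_mul_of_nonneg_left hcase (Real.rpow_nonneg hr.le _)
      _ = t * r ^ e := by ring
  -- J integrals
  have hJ0 := my_J_est (β := β₀) (A := A) m hβ₀ hβ₀m hA
  have hJ1 := my_J_est (β := β₁) (A := A) m hβ₁ hβ₁m hA
  -- integrability
  have hg₁ : IntegrableOn (fun s => s ^ (α / 2 - 1) * P s) (Ioi 0) := by
    apply Integrable.mono' (hJ0.1.const_mul C) ((hrpowm _).mul hPm)
    refine (ae_restrict_mem measurableSet_Ioi).mono fun s hs => ?_
    rw [Real.norm_eq_abs]
    exact hP1 s hs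
  have hg₂ : IntegrableOn (fun s => s ^ (α / 2 - 1) * P (s + t)) (Ioi 0) := by
    have heq : (fun s : ℝ => s ^ (α / 2 - 1) * P (s + t))
        = fun s => s ^ (α / 2 - 1) * P s - s ^ (α / 2 - 1) * (P s - P (s + t)) := by
      funext s; ring
    rw [heq]
    exact hg₁.sub hf
  have hIII : IntegrableOn (fun s => (s - t) ^ (α / 2 - 1) * P s) (Ioi t) := by
    have h0 : IntegrableOn (fun s => ((s + t) - t) ^ (α / 2 - 1) * P (s + t)) (Ioi 0) := by
      simp only [add_sub_cancel_right]
      exact hg₂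
    have h1 := (my_shift_int (fun s => (s - t) ^ (α / 2 - 1) * P s) 0 t).1 h0
    simpa using h1
  have hshift : ∫ s in Ioi (0:ℝ), s ^ (α / 2 - 1) * P (s + t)
      = ∫ s in Ioi t, (s - t) ^ (α / 2 - 1) * P s := by
    have h1 := my_shift_eq (fun s => (s - t) ^ (α / 2 - 1) * P s) 0 t
    simp only [add_sub_cancel_right, zero_add] at h1
    exact h1
  have hsub : ∫ s in Ioi (0:ℝ), s ^ (α / 2 - 1) * (P s - P (s + t))
      = (∫ s in Ioi (0:ℝ), s ^ (α / 2 - 1) * P s)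
        - ∫ s in Ioi (0:ℝ), s ^ (α / 2 - 1) * P (s + t) := by
    rw [← integral_sub hg₁ hg₂]
    apply integral_congr_ae
    exact Filter.Eventually.of_forall fun s => by ring
  have ht2 : (0:ℝ) < 2 * t := by linarith
  have hsplit1 : (∫ s in Ioi (0:ℝ), s ^ (α / 2 - 1) * P s)
      = (∫ s in Ioc (0:ℝ) (2*t), s ^ (α / 2 - 1) * P s)
        + ∫ s in Ioi (2*t), s ^ (α / 2 - 1) * P s := by
    rw [← setIntegral_union (Ioc_disjoint_Ioi le_rfl) measurableSet_Ioi
      (hg₁.mono_set Ioc_subset_Ioi_self) (hg₁.mono_set (Ioi_subset_Ioi ht2.le)),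
      Ioc_union_Ioi_eq_Ioi ht2.le]
  have hsplit2 : (∫ s in Ioi t, (s - t) ^ (α / 2 - 1) * P s)
      = (∫ s in Ioc t (2*t), (s - t) ^ (α / 2 - 1) * P s)
        + ∫ s in Ioi (2*t), (s - t) ^ (α / 2 - 1) * P s := by
    rw [← setIntegral_union (Ioc_disjoint_Ioi le_rfl) measurableSet_Ioi
      (hIII.mono_set Ioc_subset_Ioi_self) (hIII.mono_set (Ioi_subset_Ioi (by linarith))),
      Ioc_union_Ioi_eq_Ioi (by linarith : t ≤ 2*t)]
  have hJ24 : (∫ s in Ioi (2*t), s ^ (α / 2 - 1) * P s)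
      - (∫ s in Ioi (2*t), (s - t) ^ (α / 2 - 1) * P s)
      = ∫ s in Ioi (2*t), (s ^ (α / 2 - 1) - (s - t) ^ (α / 2 - 1)) * P s := by
    rw [← integral_sub (hg₁.mono_set (Ioi_subset_Ioi ht2.le))
      (hIII.mono_set (Ioi_subset_Ioi (by linarith)))]
    apply integral_congr_ae
    exact Filter.Eventually.of_forall fun s => by ring
  -- Estimate E1
  have hE1 : |∫ s in Ioc (0:ℝ) (2*t), s ^ (α / 2 - 1) * P s| ≤ D1 * (t * r ^ e) := by
    have hint : IntegrableOn (fun s => s ^ (α / 2 - 1) * P s) (Ioc 0 (2*t)) :=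
      hg₁.mono_set Ioc_subset_Ioi_self
    have h0 : |∫ s in Ioc (0:ℝ) (2*t), s ^ (α / 2 - 1) * P s|
        ≤ ∫ s in Ioc (0:ℝ) (2*t), |s ^ (α / 2 - 1) * P s| := by
      simpa only [Real.norm_eq_abs] using
        norm_integral_le_integral_norm (μ := volume.restrict (Ioc 0 (2*t)))
          (fun s => s ^ (α / 2 - 1) * P s)
    rcases le_total t (r ^ 2) with hcase | hcase
    · have hdom : IntegrableOn (fun s : ℝ => (C * Mf * (A ^ m)⁻¹) * s ^ (γ - 1)) (Ioc 0 (2*t)) := by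
        apply Integrable.const_mul
        have h2 := (intervalIntegral.intervalIntegrable_rpow'
          (a := 0) (b := 2*t) (r := γ - 1) (by linarith)).1
        exact h2
      have hval : ∫ s in Ioc (0:ℝ) (2*t), s ^ (γ - 1) = (2*t) ^ γ / γ := by
        rw [← intervalIntegral.integral_of_le ht2.le, integral_rpow (Or.inl (by linarith)),
          Real.zero_rpow (by linarith : (0:ℝ) < γ - 1 + 1).ne',
          show γ - 1 + 1 = γ from by ring, sub_zero]
      have hmono : ∫ s in Ioc (0:ℝ) (2*t), |s ^ (α / 2 - 1) * P s|
          ≤ ∫ s in Ioc (0:ℝ) (2*t), (C * Mf * (A ^ m)⁻¹) * s ^ (γ - 1) :=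
        setIntegral_mono_on hint.abs hdom measurableSet_Ioc
          (fun s hs => hP2 s (Ioc_subset_Ioi_self hs))
      have h2tγ : (2*t) ^ γ = 2 ^ γ * t ^ γ := Real.mul_rpow (by norm_num) ht.le
      calc |∫ s in Ioc (0:ℝ) (2*t), s ^ (α / 2 - 1) * P s|
          ≤ ∫ s in Ioc (0:ℝ) (2*t), (C * Mf * (A ^ m)⁻¹) * s ^ (γ - 1) := h0.trans hmono
        _ = (C * Mf * (A ^ m)⁻¹) * ((2*t) ^ γ / γ) := by rw [integral_const_mul, hval]
        _ = (C * Mf * 2 ^ γ / γ) * ((A ^ m)⁻¹ * t ^ γ) := by rw [h2tγ]; ring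
        _ ≤ (C * Mf * 2 ^ γ / γ) * ((c ^ m)⁻¹ * (t * r ^ e)) := by
            apply mul_le_mul_of_nonneg_left (keyT hcase) (by positivity)
        _ = (C * Mf * 2 ^ γ / γ * (c ^ m)⁻¹) * (t * r ^ e) := by ring
        _ ≤ D1 * (t * r ^ e) := by
            apply mul_le_mul_of_nonneg_right _ htr.le
            rw [hD1def]
            have : 0 ≤ C * K₁ * c ^ β₀ := by positivity
            linarith
    · have hdom : IntegrableOn (fun s : ℝ => C * (s ^ (β₀ - 1) * Real.exp (-(A / s))))
          (Ioc 0 (2*t)) := by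
        have hdom0 : IntegrableOn (fun s : ℝ => C * (s ^ (β₀ - 1) * Real.exp (-(A / s))))
            (Ioi 0) := hJ0.1.const_mul C
        exact hdom0.mono_set Ioc_subset_Ioi_self
      have hmono : ∫ s in Ioc (0:ℝ) (2*t), |s ^ (α / 2 - 1) * P s|
          ≤ ∫ s in Ioc (0:ℝ) (2*t), C * (s ^ (β₀ - 1) * Real.exp (-(A / s))) :=
        setIntegral_mono_on hint.abs hdom measurableSet_Ioc
          (fun s hs => hP1 s (Ioc_subset_Ioi_self hs))
      have hFnn : ∀ᵐ s ∂(volume.restrict (Ioi (0:ℝ))),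
          0 ≤ s ^ (β₀ - 1) * Real.exp (-(A / s)) := by
        refine (ae_restrict_mem measurableSet_Ioi).mono fun s hs => ?_
        have : (0:ℝ) < s := hs
        positivity
      have hext : ∫ s in Ioc (0:ℝ) (2*t), s ^ (β₀ - 1) * Real.exp (-(A / s))
          ≤ ∫ s in Ioi (0:ℝ), s ^ (β₀ - 1) * Real.exp (-(A / s)) :=
        setIntegral_mono_set hJ0.1 hFnn (HasSubset.Subset.eventuallyLE Ioc_subset_Ioi_self)
      calc |∫ s in Ioc (0:ℝ) (2*t), s ^ (α / 2 - 1) * P s|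
          ≤ ∫ s in Ioc (0:ℝ) (2*t), C * (s ^ (β₀ - 1) * Real.exp (-(A / s))) := h0.trans hmono
        _ = C * ∫ s in Ioc (0:ℝ) (2*t), s ^ (β₀ - 1) * Real.exp (-(A / s)) := integral_const_mul _ _
        _ ≤ C * ∫ s in Ioi (0:ℝ), s ^ (β₀ - 1) * Real.exp (-(A / s)) :=
            mul_le_mul_of_nonneg_left hext hC.le
        _ ≤ C * (K₁ * A ^ β₀) := mul_le_mul_of_nonneg_left hJ0.2 hC.le
        _ = (C * K₁ * c ^ β₀) * r ^ (α - (n:ℝ)) := by rw [keyB]; ring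
        _ ≤ (C * K₁ * c ^ β₀) * (t * r ^ e) := by
            apply mul_le_mul_of_nonneg_left (hrle hcase) (by positivity)
        _ ≤ D1 * (t * r ^ e) := by
            apply mul_le_mul_of_nonneg_right _ htr.le
            rw [hD1def]
            have : 0 ≤ C * Mf * 2 ^ γ / γ * (c ^ m)⁻¹ := by positivity
            linarith
  -- Estimate E2
  have hE2 : |∫ s in Ioc t (2*t), (s - t) ^ (α / 2 - 1) * P s| ≤ D2 * (t * r ^ e) := by
    have hint : IntegrableOn (fun s => (s - t) ^ (α / 2 - 1) * P s) (Ioc t (2*t)) :=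
      hIII.mono_set Ioc_subset_Ioi_self
    have h0 : |∫ s in Ioc t (2*t), (s - t) ^ (α / 2 - 1) * P s|
        ≤ ∫ s in Ioc t (2*t), |(s - t) ^ (α / 2 - 1) * P s| := by
      simpa only [Real.norm_eq_abs] using
        norm_integral_le_integral_norm (μ := volume.restrict (Ioc t (2*t)))
          (fun s => (s - t) ^ (α / 2 - 1) * P s)
    have hdomI : IntegrableOn (fun s : ℝ => (s - t) ^ (α / 2 - 1)) (Ioc t (2*t)) := by
      have h1 := ((intervalIntegral.intervalIntegrable_rpow'
        (a := 0) (b := t) (r := α / 2 - 1) (by linarith)).comp_sub_right t).1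
      simp only [zero_add] at h1
      have h2 : t + t = 2 * t := by ring
      rwa [h2] at h1
    have hvalI : ∫ s in Ioc t (2*t), (s - t) ^ (α / 2 - 1) = t ^ (α / 2) * (2 / α) := by
      rw [← intervalIntegral.integral_of_le (by linarith : t ≤ 2*t),
        intervalIntegral.integral_comp_sub_right (fun u => u ^ (α / 2 - 1)) t,
        show 2*t - t = t from by ring, sub_self,
        integral_rpow (Or.inl (by linarith : (-1:ℝ) < α / 2 - 1)),
        Real.zero_rpow (by linarith : (0:ℝ) < α / 2 - 1 + 1).ne',
        show α / 2 - 1 + 1 = α / 2 from by ring, sub_zero]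
      rw [div_eq_mul_inv]
      congr 1
      rw [show (2:ℝ) / α = (α / 2)⁻¹ from by
        rw [div_eq_mul_inv, div_eq_mul_inv]
        rw [mul_inv, inv_inv]
        ring]
    rcases le_total t (r ^ 2) with hcase | hcase
    · set Mb : ℝ := C * Mf * (A ^ m)⁻¹ * (2*t) ^ ((m:ℝ) - (n:ℝ)/2) with hMbdef
      have hMb : 0 ≤ Mb := by rw [hMbdef]; positivity
      have hptw : ∀ s ∈ Ioc t (2*t), |(s - t) ^ (α / 2 - 1) * P s| ≤ Mb * (s - t) ^ (α / 2 - 1) := by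
        intro s hs
        have hs0 : (0:ℝ) < s := ht.trans hs.1
        have hst : (0:ℝ) < s - t := by linarith [hs.1]
        rw [abs_mul, abs_of_nonneg (Real.rpow_nonneg hst.le _)]
        have hPb : |P s| ≤ Mb := by
          have h1 := hP s hs0
          have hexp : Real.exp (-(A / s)) ≤ Mf / (A / s) ^ m := my_exp_neg_le m (by positivity)
          have h2 : C * s ^ (-(n:ℝ) / 2) * Real.exp (-(A / s))
              ≤ C * s ^ (-(n:ℝ) / 2) * (Mf / (A / s) ^ m) := by
            apply mul_le_mul_of_nonneg_left hexp (by positivity)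
          have h3 : C * s ^ (-(n:ℝ) / 2) * (Mf / (A / s) ^ m)
              = C * Mf * (A ^ m)⁻¹ * s ^ ((m:ℝ) - (n:ℝ)/2) := by
            rw [div_pow, div_div_eq_mul_div,
              show (m:ℝ) - (n:ℝ)/2 = (-(n:ℝ)/2) + (m:ℝ) from by ring,
              Real.rpow_add hs0, Real.rpow_natCast]
            field_simp
          have h4 : s ^ ((m:ℝ) - (n:ℝ)/2) ≤ (2*t) ^ ((m:ℝ) - (n:ℝ)/2) := by
            apply Real.rpow_le_rpow hs0.le hs.2
            rw [hmR]; linarith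
          calc |P s| ≤ C * s ^ (-(n:ℝ) / 2) * Real.exp (-(A / s)) := h1
            _ ≤ C * Mf * (A ^ m)⁻¹ * s ^ ((m:ℝ) - (n:ℝ)/2) := by rw [← h3]; exact h2
            _ ≤ Mb := by
                rw [hMbdef]
                apply mul_le_mul_of_nonneg_left h4 (by positivity)
        calc (s - t) ^ (α / 2 - 1) * |P s| ≤ (s - t) ^ (α / 2 - 1) * Mb :=
              mul_le_mul_of_nonneg_left hPb (Real.rpow_nonneg hst.le _)
          _ = Mb * (s - t) ^ (α / 2 - 1) := by ring
      have hmono : ∫ s in Ioc t (2*t), |(s - t) ^ (α / 2 - 1) * P s|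
          ≤ ∫ s in Ioc t (2*t), Mb * (s - t) ^ (α / 2 - 1) :=
        setIntegral_mono_on hint.abs (hdomI.const_mul Mb) measurableSet_Ioc hptw
      have harith : Mb * (t ^ (α / 2) * (2 / α)) ≤
          (C * Mf * 2 ^ ((m:ℝ) - (n:ℝ)/2) * (2/α) * (c ^ m)⁻¹) * (t * r ^ e) := by
        have h2t : (2*t) ^ ((m:ℝ) - (n:ℝ)/2) = 2 ^ ((m:ℝ) - (n:ℝ)/2) * t ^ ((m:ℝ) - (n:ℝ)/2) :=
          Real.mul_rpow (by norm_num) ht.le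
        have htγ : t ^ ((m:ℝ) - (n:ℝ)/2) * t ^ (α / 2) = t ^ γ := by
          rw [← Real.rpow_add ht]
          congr 1
          rw [hγdef]
          ring
        have hle : Mb * (t ^ (α / 2) * (2 / α))
            = (C * Mf * 2 ^ ((m:ℝ) - (n:ℝ)/2) * (2/α)) * ((A ^ m)⁻¹ * t ^ γ) := by
          rw [hMbdef, h2t, ← htγ]
          ring
        rw [hle]
        calc (C * Mf * 2 ^ ((m:ℝ) - (n:ℝ)/2) * (2/α)) * ((A ^ m)⁻¹ * t ^ γ)
            ≤ (C * Mf * 2 ^ ((m:ℝ) - (n:ℝ)/2) * (2/α)) * ((c ^ m)⁻¹ * (t * r ^ e)) := by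
              apply mul_le_mul_of_nonneg_left (keyT hcase) (by positivity)
          _ = (C * Mf * 2 ^ ((m:ℝ) - (n:ℝ)/2) * (2/α) * (c ^ m)⁻¹) * (t * r ^ e) := by ring
      calc |∫ s in Ioc t (2*t), (s - t) ^ (α / 2 - 1) * P s|
          ≤ ∫ s in Ioc t (2*t), Mb * (s - t) ^ (α / 2 - 1) := h0.trans hmono
        _ = Mb * (t ^ (α / 2) * (2 / α)) := by rw [integral_const_mul, hvalI]
        _ ≤ (C * Mf * 2 ^ ((m:ℝ) - (n:ℝ)/2) * (2/α) * (c ^ m)⁻¹) * (t * r ^ e) := harith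
        _ ≤ D2 * (t * r ^ e) := by
            apply mul_le_mul_of_nonneg_right _ htr.le
            rw [hD2def]
            have : 0 ≤ C * (2 / α) := by positivity
            linarith
    · set Mb : ℝ := C * t ^ (-(n:ℝ) / 2) with hMbdef
      have hMb : 0 ≤ Mb := by rw [hMbdef]; positivity
      have hptw : ∀ s ∈ Ioc t (2*t), |(s - t) ^ (α / 2 - 1) * P s| ≤ Mb * (s - t) ^ (α / 2 - 1) := by
        intro s hs
        have hs0 : (0:ℝ) < s := ht.trans hs.1
        have hst : (0:ℝ) < s - t := by linarith [hs.1]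
        rw [abs_mul, abs_of_nonneg (Real.rpow_nonneg hst.le _)]
        have hPb : |P s| ≤ Mb := by
          have h1 := hP s hs0
          have hexp : Real.exp (-(A / s)) ≤ 1 :=
            Real.exp_le_one_iff.2 (neg_nonpos.2 (by positivity))
          have h4 : s ^ (-(n:ℝ) / 2) ≤ t ^ (-(n:ℝ) / 2) := by
            rw [neg_div]
            exact Real.rpow_le_rpow_of_nonpos ht hs.1.le (neg_nonpos.2 (by positivity))
          calc |P s| ≤ C * s ^ (-(n:ℝ) / 2) * Real.exp (-(A / s)) := h1
            _ ≤ C * s ^ (-(n:ℝ) / 2) * 1 := mul_le_mul_of_nonneg_left hexp (by positivity)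
            _ = C * s ^ (-(n:ℝ) / 2) := mul_one _
            _ ≤ Mb := by
                rw [hMbdef]
                exact mul_le_mul_of_nonneg_left h4 hC.le
        calc (s - t) ^ (α / 2 - 1) * |P s| ≤ (s - t) ^ (α / 2 - 1) * Mb :=
              mul_le_mul_of_nonneg_left hPb (Real.rpow_nonneg hst.le _)
          _ = Mb * (s - t) ^ (α / 2 - 1) := by ring
      have hmono : ∫ s in Ioc t (2*t), |(s - t) ^ (α / 2 - 1) * P s|
          ≤ ∫ s in Ioc t (2*t), Mb * (s - t) ^ (α / 2 - 1) :=
        setIntegral_mono_on hint.abs (hdomI.const_mul Mb) measurableSet_Ioc hptw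
      have harith : Mb * (t ^ (α / 2) * (2 / α)) ≤ (C * (2/α)) * (t * r ^ e) := by
        have h1 : t ^ (-(n:ℝ) / 2) * t ^ (α / 2) = t * t ^ β₁ := by
          rw [← Real.rpow_add ht]
          nth_rewrite 2 [show t = t ^ (1:ℝ) from (Real.rpow_one t).symm]
          rw [← Real.rpow_add ht]
          congr 1
          rw [hβ₁def]
          ring
        have h2 : t ^ β₁ ≤ (r ^ 2) ^ β₁ := Real.rpow_le_rpow_of_nonpos (by positivity) hcase hβ₁.le
        have h3 : ((r:ℝ) ^ (2:ℕ)) ^ β₁ = r ^ e := hr2e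
        calc Mb * (t ^ (α / 2) * (2 / α)) = (C * (2/α)) * (t * t ^ β₁) := by
              rw [hMbdef, ← h1]; ring
          _ ≤ (C * (2/α)) * (t * ((r ^ 2) ^ β₁)) := by
              apply mul_le_mul_of_nonneg_left _ (by positivity)
              exact mul_le_mul_of_nonneg_left h2 ht.le
          _ = (C * (2/α)) * (t * r ^ e) := by rw [h3]
      calc |∫ s in Ioc t (2*t), (s - t) ^ (α / 2 - 1) * P s|
          ≤ ∫ s in Ioc t (2*t), Mb * (s - t) ^ (α / 2 - 1) := h0.trans hmono
        _ = Mb * (t ^ (α / 2) * (2 / α)) := by rw [integral_const_mul, hvalI]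
        _ ≤ (C * (2/α)) * (t * r ^ e) := harith
        _ ≤ D2 * (t * r ^ e) := by
            apply mul_le_mul_of_nonneg_right _ htr.le
            rw [hD2def]
            have : 0 ≤ C * Mf * 2 ^ ((m:ℝ) - (n:ℝ)/2) * (2/α) * (c ^ m)⁻¹ := by positivity
            linarith
  -- Estimate E3
  have hE3 : |∫ s in Ioi (2*t), (s ^ (α / 2 - 1) - (s - t) ^ (α / 2 - 1)) * P s|
      ≤ D3 * (t * r ^ e) := by
    have hintE3 : IntegrableOn (fun s => (s ^ (α / 2 - 1) - (s - t) ^ (α / 2 - 1)) * P s)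
        (Ioi (2*t)) := by
      have heq : (fun s : ℝ => (s ^ (α / 2 - 1) - (s - t) ^ (α / 2 - 1)) * P s)
          = fun s => s ^ (α / 2 - 1) * P s - (s - t) ^ (α / 2 - 1) * P s := by
        funext s; ring
      rw [heq]
      exact (hg₁.mono_set (Ioi_subset_Ioi ht2.le)).sub
        (hIII.mono_set (Ioi_subset_Ioi (by linarith)))
    have hdom : IntegrableOn
        (fun s : ℝ => (Kδ * t * C) * (s ^ (β₁ - 1) * Real.exp (-(A / s)))) (Ioi (2*t)) := by
      have hdom0 : IntegrableOn
          (fun s : ℝ => (Kδ * t * C) * (s ^ (β₁ - 1) * Real.exp (-(A / s)))) (Ioi 0) :=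
        hJ1.1.const_mul _
      exact hdom0.mono_set (Ioi_subset_Ioi ht2.le)
    have hptw : ∀ s ∈ Ioi (2*t), |(s ^ (α / 2 - 1) - (s - t) ^ (α / 2 - 1)) * P s|
        ≤ (Kδ * t * C) * (s ^ (β₁ - 1) * Real.exp (-(A / s))) := by
      intro s hs
      have hs2t : 2 * t ≤ s := le_of_lt hs
      have hs0 : (0:ℝ) < s := lt_of_lt_of_le ht2 hs2t
      rw [abs_mul]
      have h1 := my_rpow_diff (δ := α / 2 - 1) ht hs2t
      have h2 := hP s hs0
      calc |s ^ (α / 2 - 1) - (s - t) ^ (α / 2 - 1)| * |P s|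
          ≤ (Kδ * t * s ^ (α / 2 - 1 - 1)) * (C * s ^ (-(n:ℝ) / 2) * Real.exp (-(A / s))) := by
            apply mul_le_mul _ h2 (abs_nonneg _) (by positivity)
            calc |s ^ (α / 2 - 1) - (s - t) ^ (α / 2 - 1)|
                ≤ (|α / 2 - 1| * max 1 (2 ^ (1 - (α / 2 - 1)))) * t * s ^ (α / 2 - 1 - 1) := h1
              _ = Kδ * t * s ^ (α / 2 - 1 - 1) := by rw [hKδdef]
        _ = (Kδ * t * C) * (s ^ (β₁ - 1) * Real.exp (-(A / s))) := by
            rw [show β₁ - 1 = (α / 2 - 1 - 1) + (-(n:ℝ) / 2) from by rw [hβ₁def]; ring,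
              Real.rpow_add hs0]
            ring
    have h0 : |∫ s in Ioi (2*t), (s ^ (α / 2 - 1) - (s - t) ^ (α / 2 - 1)) * P s|
        ≤ ∫ s in Ioi (2*t), |(s ^ (α / 2 - 1) - (s - t) ^ (α / 2 - 1)) * P s| := by
      simpa only [Real.norm_eq_abs] using
        norm_integral_le_integral_norm (μ := volume.restrict (Ioi (2*t)))
          (fun s => (s ^ (α / 2 - 1) - (s - t) ^ (α / 2 - 1)) * P s)
    have hmono : ∫ s in Ioi (2*t), |(s ^ (α / 2 - 1) - (s - t) ^ (α / 2 - 1)) * P s|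
        ≤ ∫ s in Ioi (2*t), (Kδ * t * C) * (s ^ (β₁ - 1) * Real.exp (-(A / s))) :=
      setIntegral_mono_on hintE3.abs hdom measurableSet_Ioi hptw
    have hFnn : ∀ᵐ s ∂(volume.restrict (Ioi (0:ℝ))),
        0 ≤ s ^ (β₁ - 1) * Real.exp (-(A / s)) := by
      refine (ae_restrict_mem measurableSet_Ioi).mono fun s hs => ?_
      have : (0:ℝ) < s := hs
      positivity
    have hext : ∫ s in Ioi (2*t), s ^ (β₁ - 1) * Real.exp (-(A / s))
        ≤ ∫ s in Ioi (0:ℝ), s ^ (β₁ - 1) * Real.exp (-(A / s)) :=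
      setIntegral_mono_set hJ1.1 hFnn
        (HasSubset.Subset.eventuallyLE (Ioi_subset_Ioi ht2.le))
    calc |∫ s in Ioi (2*t), (s ^ (α / 2 - 1) - (s - t) ^ (α / 2 - 1)) * P s|
        ≤ ∫ s in Ioi (2*t), (Kδ * t * C) * (s ^ (β₁ - 1) * Real.exp (-(A / s))) := h0.trans hmono
      _ = (Kδ * t * C) * ∫ s in Ioi (2*t), s ^ (β₁ - 1) * Real.exp (-(A / s)) :=
          integral_const_mul _ _
      _ ≤ (Kδ * t * C) * ∫ s in Ioi (0:ℝ), s ^ (β₁ - 1) * Real.exp (-(A / s)) := by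
          apply mul_le_mul_of_nonneg_left hext (by positivity)
      _ ≤ (Kδ * t * C) * (K₂ * A ^ β₁) := by
          apply mul_le_mul_of_nonneg_left hJ1.2 (by positivity)
      _ = D3 * (t * r ^ e) := by
          rw [keyC, hD3def]
          ring
  -- assemble
  rw [abs_mul, abs_of_pos hΓipos, hsub, hshift, hsplit1, hsplit2]
  have habs : ∀ a b cc d : ℝ, |(a + b) - (cc + d)| ≤ |a| + |cc| + |b - d| := by
    intro a b cc d
    calc |(a + b) - (cc + d)| = |(a - cc) + (b - d)| := by
          rw [show (a + b) - (cc + d) = (a - cc) + (b - d) from by ring]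
      _ ≤ |a - cc| + |b - d| := abs_add_le _ _
      _ ≤ (|a| + |cc|) + |b - d| := by
          refine add_le_add ?_ le_rfl
          calc |a - cc| = |a + -cc| := by rw [sub_eq_add_neg]
            _ ≤ |a| + |-cc| := abs_add_le _ _
            _ = |a| + |cc| := by rw [abs_neg]
  have h24 : |(∫ s in Ioi (2*t), s ^ (α / 2 - 1) * P s)
      - ∫ s in Ioi (2*t), (s - t) ^ (α / 2 - 1) * P s| ≤ D3 * (t * r ^ e) := by
    rw [hJ24]
    exact hE3
  calc (Real.Gamma (α / 2))⁻¹ *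
        |((∫ s in Ioc (0:ℝ) (2*t), s ^ (α / 2 - 1) * P s)
            + ∫ s in Ioi (2*t), s ^ (α / 2 - 1) * P s)
          - ((∫ s in Ioc t (2*t), (s - t) ^ (α / 2 - 1) * P s)
            + ∫ s in Ioi (2*t), (s - t) ^ (α / 2 - 1) * P s)|
      ≤ (Real.Gamma (α / 2))⁻¹ *
          (|∫ s in Ioc (0:ℝ) (2*t), s ^ (α / 2 - 1) * P s|
            + |∫ s in Ioc t (2*t), (s - t) ^ (α / 2 - 1) * P s|
            + |(∫ s in Ioi (2*t), s ^ (α / 2 - 1) * P s)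
              - ∫ s in Ioi (2*t), (s - t) ^ (α / 2 - 1) * P s|) :=
        mul_le_mul_of_nonneg_left (habs _ _ _ _) hΓipos.le
    _ ≤ (Real.Gamma (α / 2))⁻¹ * (D1 * (t * r ^ e) + D2 * (t * r ^ e) + D3 * (t * r ^ e)) := by
        apply mul_le_mul_of_nonneg_left _ hΓipos.le
        exact add_le_add (add_le_add hE1 hE2) h24
    _ = ((Real.Gamma (α / 2))⁻¹ * (D1 + D2 + D3)) * (t * r ^ e) := by ring
    _ ≤ C' * (t * r ^ e) := by
        apply mul_le_mul_of_nonneg_right _ htr.le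
        rw [hC'def]
        linarith
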